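/- Let n ≥ 1 be an integer, let β_0, β_1, …, β_n be real numbers with 0 = β_0 < β_1 < … < β_n, and let r_0, r_1, …, r_n be nonzero complex numbers. Define g(λ) = ∑_{j=0}^{n} r_j·exp(β_j·λ) for λ ∈ ℂ. Then there exists c₁ > 0 such that every λ ∈ ℂ with g(λ) = 0 satisfies |Re λ| < c₁. -/

import Mathlib

theorem exponential_polynomial_zeros_in_strip
    (n : ℕ) (hn : 1 ≤ n) (β : Fin (n + 1) → ℝ) (hβ0 : β 0 = 0) (hβ : StrictMono β)
    (r : Fin (n + 1) → ℂ) (hr : ∀ j, r j ≠ 0) :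
    ∃ c₁ > 0, ∀ lam : ℂ,
      (∑ j, r j * Complex.exp ((β j : ℂ) * lam)) = 0 → |lam.re| < c₁ := by
  classical
  set N : Fin (n + 1) := Fin.last n with hN
  set m : Fin (n + 1) := ⟨n - 1, by omega⟩ with hm
  have h1lt : (0 : Fin (n+1)) < 1 := by
    rw [Fin.lt_def]
    simp [Fin.val_one', Nat.mod_eq_of_lt (by omega : 1 < n + 1)]
  have hβ1 : 0 < β 1 := by
    have := hβ h1lt
    rwa [hβ0] at this
  have hmN : m < N := by
    rw [Fin.lt_def]
    simp [hN, hm]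
    omega
  have hδ : 0 < β N - β m := sub_pos.mpr (hβ hmN)
  set S : ℝ := ∑ j, ‖r j‖ with hS
  have hSpos : 0 < S := by
    apply Finset.sum_pos
    · intro j _
      exact norm_pos_iff.mpr (hr j)
    · exact ⟨0, Finset.mem_univ 0⟩
  set c₁ : ℝ := max 1 (max ((Real.log (S / ‖r 0‖) + 1) / β 1)
      ((Real.log (S / ‖r N‖) + 1) / (β N - β m))) with hc₁
  have hc₁1 : (1 : ℝ) ≤ c₁ := le_max_left _ _
  refine ⟨c₁, lt_of_lt_of_le one_pos hc₁1, ?_⟩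
  intro lam hlam
  by_contra hcon
  push_neg at hcon
  set x := lam.re with hx
  have key : ∀ j, ‖r j * Complex.exp ((β j : ℂ) * lam)‖ = ‖r j‖ * Real.exp (β j * x) := by
    intro j
    rw [norm_mul, Complex.norm_exp]
    congr 2
    simp [Complex.mul_re, hx]
  rcases le_abs.mp hcon with hpos | hneg
  · -- x ≥ c₁ : the last term dominates
    have hsplit := Finset.add_sum_erase Finset.univ
      (fun j => r j * Complex.exp ((β j : ℂ) * lam)) (Finset.mem_univ N)
    rw [← hsplit] at hlam
    have heq : r N * Complex.exp ((β N : ℂ) * lam)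
        = -∑ j ∈ Finset.univ.erase N, r j * Complex.exp ((β j : ℂ) * lam) := by
      linear_combination hlam
    have hnorm : ‖r N‖ * Real.exp (β N * x)
        ≤ ∑ j ∈ Finset.univ.erase N, ‖r j‖ * Real.exp (β j * x) := by
      calc ‖r N‖ * Real.exp (β N * x) = ‖r N * Complex.exp ((β N : ℂ) * lam)‖ := (key N).symm
        _ = ‖∑ j ∈ Finset.univ.erase N, r j * Complex.exp ((β j : ℂ) * lam)‖ := by
            rw [heq, norm_neg]
        _ ≤ ∑ j ∈ Finset.univ.erase N, ‖r j * Complex.exp ((β j : ℂ) * lam)‖ :=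
            norm_sum_le _ _
        _ = _ := by simp_rw [key]
    have hbound : ∑ j ∈ Finset.univ.erase N, ‖r j‖ * Real.exp (β j * x)
        ≤ S * Real.exp (β m * x) := by
      calc ∑ j ∈ Finset.univ.erase N, ‖r j‖ * Real.exp (β j * x)
          ≤ ∑ j ∈ Finset.univ.erase N, ‖r j‖ * Real.exp (β m * x) := by
            apply Finset.sum_le_sum
            intro j hj
            have hjN : j ≠ N := Finset.ne_of_mem_erase hj
            have hjm : β j ≤ β m := by
              apply hβ.monotone
              rw [Fin.le_def]
              have := Fin.lt_last_iff_ne_last.mpr hjN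
              rw [Fin.lt_def] at this
              simp [hm, hN] at this ⊢
              omega
            have hx0 : 0 ≤ x := le_trans (le_trans zero_le_one hc₁1) hpos
            exact mul_le_mul_of_nonneg_left
              (Real.exp_le_exp.mpr (mul_le_mul_of_nonneg_right hjm hx0)) (norm_nonneg _)
        _ ≤ ∑ j, ‖r j‖ * Real.exp (β m * x) := by
            apply Finset.sum_le_sum_of_subset_of_nonneg (Finset.erase_subset _ _)
            intro j _ _
            positivity
        _ = S * Real.exp (β m * x) := by rw [hS, Finset.sum_mul]
    have hfinal : ‖r N‖ ≤ S * Real.exp ((β m - β N) * x) := by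
      have hEpos : 0 < Real.exp (β N * x) := Real.exp_pos _
      have hle := le_trans hnorm hbound
      calc ‖r N‖ = ‖r N‖ * Real.exp (β N * x) / Real.exp (β N * x) := by field_simp
        _ ≤ S * Real.exp (β m * x) / Real.exp (β N * x) := by gcongr
        _ = S * Real.exp ((β m - β N) * x) := by
            rw [sub_mul, Real.exp_sub]; ring
    have hlt : Real.exp ((β m - β N) * x) < ‖r N‖ / S := by
      have h1 : (β N - β m) * x ≥ Real.log (S / ‖r N‖) + 1 := by
        have h2 : (Real.log (S / ‖r N‖) + 1) / (β N - β m) ≤ c₁ :=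
          le_trans (le_max_right _ _) (le_max_right _ _)
        have h3 : c₁ ≤ x := hpos
        calc Real.log (S / ‖r N‖) + 1 ≤ (β N - β m) * c₁ := by
              rw [← div_le_iff₀' hδ] at *; linarith [h2]
          _ ≤ (β N - β m) * x := by nlinarith
      have : (β m - β N) * x ≤ -(Real.log (S / ‖r N‖) + 1) := by nlinarith [h1]
      calc Real.exp ((β m - β N) * x) ≤ Real.exp (-(Real.log (S / ‖r N‖) + 1)) :=
            Real.exp_le_exp.mpr this
        _ < Real.exp (-Real.log (S / ‖r N‖)) := by
            apply Real.exp_lt_exp.mpr; linarith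
        _ = ‖r N‖ / S := by
            rw [Real.exp_neg,
              Real.exp_log (div_pos hSpos (norm_pos_iff.mpr (hr N))), inv_div]
    have : ‖r N‖ < S * (‖r N‖ / S) := lt_of_le_of_lt hfinal
      (by exact mul_lt_mul_of_pos_left hlt hSpos)
    rw [mul_div_cancel₀ _ (ne_of_gt hSpos)] at this
    exact lt_irrefl _ this
  · -- x ≤ -c₁ : the constant term dominates
    have hxneg : x ≤ -c₁ := by linarith
    have hsplit := Finset.add_sum_erase Finset.univ
      (fun j => r j * Complex.exp ((β j : ℂ) * lam)) (Finset.mem_univ 0)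
    rw [← hsplit] at hlam
    have heq : r 0 * Complex.exp ((β 0 : ℂ) * lam)
        = -∑ j ∈ Finset.univ.erase 0, r j * Complex.exp ((β j : ℂ) * lam) := by
      linear_combination hlam
    have hnorm : ‖r 0‖ ≤ ∑ j ∈ Finset.univ.erase 0, ‖r j‖ * Real.exp (β j * x) := by
      calc ‖r 0‖ = ‖r 0‖ * Real.exp (β 0 * x) := by rw [hβ0]; simp
        _ = ‖r 0 * Complex.exp ((β 0 : ℂ) * lam)‖ := (key 0).symm
        _ = ‖∑ j ∈ Finset.univ.erase 0, r j * Complex.exp ((β j : ℂ) * lam)‖ := by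
            rw [heq, norm_neg]
        _ ≤ ∑ j ∈ Finset.univ.erase 0, ‖r j * Complex.exp ((β j : ℂ) * lam)‖ :=
            norm_sum_le _ _
        _ = _ := by simp_rw [key]
    have hbound : ∑ j ∈ Finset.univ.erase 0, ‖r j‖ * Real.exp (β j * x)
        ≤ S * Real.exp (β 1 * x) := by
      calc ∑ j ∈ Finset.univ.erase 0, ‖r j‖ * Real.exp (β j * x)
          ≤ ∑ j ∈ Finset.univ.erase 0, ‖r j‖ * Real.exp (β 1 * x) := by
            apply Finset.sum_le_sum
            intro j hj
            have hj0 : j ≠ 0 := Finset.ne_of_mem_erase hj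
            have hj1 : β 1 ≤ β j := by
              apply hβ.monotone
              rw [Fin.le_def]
              have : j.val ≠ 0 := fun h => hj0 (Fin.ext h)
              simp [Fin.val_one', Nat.mod_eq_of_lt (by omega : 1 < n + 1)]
              omega
            have hx0 : x ≤ 0 := le_trans hxneg (by linarith)
            exact mul_le_mul_of_nonneg_left
              (Real.exp_le_exp.mpr (mul_le_mul_of_nonpos_right hj1 hx0)) (norm_nonneg _)
        _ ≤ ∑ j, ‖r j‖ * Real.exp (β 1 * x) := by
            apply Finset.sum_le_sum_of_subset_of_nonneg (Finset.erase_subset _ _)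
            intro j _ _
            positivity
        _ = S * Real.exp (β 1 * x) := by rw [hS, Finset.sum_mul]
    have hlt : Real.exp (β 1 * x) < ‖r 0‖ / S := by
      have h2 : (Real.log (S / ‖r 0‖) + 1) / β 1 ≤ c₁ :=
        le_trans (le_max_left _ _) (le_max_right _ _)
      have h1 : β 1 * x ≤ -(Real.log (S / ‖r 0‖) + 1) := by
        rw [div_le_iff₀ hβ1] at h2
        nlinarith [mul_le_mul_of_nonneg_left hxneg (le_of_lt hβ1)]
      calc Real.exp (β 1 * x) ≤ Real.exp (-(Real.log (S / ‖r 0‖) + 1)) :=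
            Real.exp_le_exp.mpr h1
        _ < Real.exp (-Real.log (S / ‖r 0‖)) := by
            apply Real.exp_lt_exp.mpr; linarith
        _ = ‖r 0‖ / S := by
            rw [Real.exp_neg,
              Real.exp_log (div_pos hSpos (norm_pos_iff.mpr (hr 0))), inv_div]
    have : ‖r 0‖ < S * (‖r 0‖ / S) := lt_of_le_of_lt (le_trans hnorm hbound)
      (by exact mul_lt_mul_of_pos_left hlt hSpos)
    rw [mul_div_cancel₀ _ (ne_of_gt hSpos)] at this
    exact lt_irrefl _ this
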